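/- arXiv:1504.06213 — 5 statements merged into one kernel-verified Lean document; each statement's English description precedes it below -/
import Mathlib

section
/- Let F be a field of characteristic zero and let P ∈ F[X_1,…,X_N] be homogeneous of degree n with P = ∑_{i=1}^{T} α_i ∏_{j=1}^{d} Q_{ij}, where each α_i ∈ F and the constant term of each Q_{ij} is either 0 or 1. For each i let S_i = { j ∈ {1,…,d} : the constant term of Q_{ij} equals 1 }. Then P = ∑_{i=1}^{T} α_i · Hom^n[ ∏_{j ∉ S_i} Q_{ij} · ∑_{l=0}^{n} ( ∑_{U ⊆ S_i, |U| = l} ∏_{j ∈ U} Hom^{≥1}[Q_{ij}] ) ]. -/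
open MvPolynomial

/-- If every factor has zero constant coefficient, coefficients of monomials of
degree less than the number of factors vanish. -/
lemma aux_coeff_prod_zero {N : ℕ} {F : Type*} [Field F] {ι : Type*}
    (U : Finset ι) (p : ι → MvPolynomial (Fin N) F)
    (hp : ∀ j ∈ U, coeff 0 (p j) = 0) :
    ∀ m : Fin N →₀ ℕ, m.degree < U.card → coeff m (∏ j ∈ U, p j) = 0 := by
  classical
  induction U using Finset.induction with
  | empty => intro m hm; simp at hm
  | @insert j U' hj ih =>
    intro m hm
    rw [Finset.prod_insert hj, MvPolynomial.coeff_mul]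
    apply Finset.sum_eq_zero
    rintro ⟨a, b⟩ hab
    rw [Finset.HasAntidiagonal.mem_antidiagonal] at hab
    by_cases ha : a = 0
    · subst ha
      simp [hp j (Finset.mem_insert_self _ _)]
    · have hb : b.degree < U'.card := by
        have : b.degree < m.degree := by
          have hd : a.degree + b.degree = m.degree := by
            rw [← hab]; simp [Finsupp.degree_eq_weight_one, map_add]
          have ha' : 0 < a.degree := by
            rcases Nat.eq_zero_or_pos a.degree with h0 | h0
            · exact absurd ((Finsupp.degree_eq_zero_iff a).mp h0) ha
            · exact h0
          omega
        rw [Finset.card_insert_of_notMem hj] at hm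
        omega
      rw [ih (fun k hk => hp k (Finset.mem_insert_of_mem hk)) b hb, mul_zero]

lemma aux_homComp_mul_prod_zero {N : ℕ} {F : Type*} [Field F] {ι : Type*}
    (U : Finset ι) (p : ι → MvPolynomial (Fin N) F)
    (hp : ∀ j ∈ U, coeff 0 (p j) = 0) (A : MvPolynomial (Fin N) F)
    (n : ℕ) (hn : n < U.card) :
    homogeneousComponent n (A * ∏ j ∈ U, p j) = 0 := by
  ext m
  rw [coeff_homogeneousComponent, coeff_zero]
  split_ifs with h
  · rw [MvPolynomial.coeff_mul]
    apply Finset.sum_eq_zero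
    rintro ⟨a, b⟩ hab
    rw [Finset.HasAntidiagonal.mem_antidiagonal] at hab
    have hb : b.degree < U.card := by
      have hd : a.degree + b.degree = m.degree := by
        rw [← hab]; simp [Finsupp.degree_eq_weight_one, map_add]
      omega
    rw [aux_coeff_prod_zero U p hp b hb, mul_zero]
  · rfl

/-- Let `P ∈ F[X_1,…,X_N]` be homogeneous of degree `n` with
`P = ∑_{i=1}^T α_i ∏_{j=1}^d Q_{ij}` where the constant term of each `Q_{ij}` is `0` or `1`.
With `S_i = {j : coeff 0 (Q_{ij}) = 1}`, we have
`P = ∑_i α_i · Hom^n[ (∏_{j ∉ S_i} Q_{ij}) · ∑_{l=0}^n ∑_{U ⊆ S_i, |U|=l} ∏_{j ∈ U} Hom^{≥1}[Q_{ij}] ]`,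
where `Hom^{≥1}[Q] = Q - C (coeff 0 Q)`. -/
theorem stmt3 (F : Type*) [Field F] [CharZero F] (N n T d : ℕ)
    (P : MvPolynomial (Fin N) F) (hP : P.IsHomogeneous n)
    (α : Fin T → F) (Q : Fin T → Fin d → MvPolynomial (Fin N) F)
    (hconst : ∀ i j, coeff 0 (Q i j) = 0 ∨ coeff 0 (Q i j) = 1)
    (hrep : P = ∑ i, C (α i) * ∏ j, Q i j)
    (S : Fin T → Finset (Fin d))
    (hS : ∀ i j, j ∈ S i ↔ coeff 0 (Q i j) = 1) :
    P = ∑ i, C (α i) *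
      homogeneousComponent n
        ((∏ j ∈ (S i)ᶜ, Q i j) *
          ∑ l ∈ Finset.range (n + 1), ∑ U ∈ Finset.powersetCard l (S i),
            ∏ j ∈ U, (Q i j - C (coeff 0 (Q i j)))) := by
  classical
  -- P equals its own homogeneous component
  have hPc : homogeneousComponent n P = P := by
    rw [homogeneousComponent_of_mem ((mem_homogeneousSubmodule n P).mpr hP), if_pos rfl]
  conv_lhs => rw [← hPc, hrep]
  rw [map_sum]
  apply Finset.sum_congr rfl
  intro i _
  rw [homogeneousComponent_C_mul]
  congr 1
  -- split the product over the complement of S i and S i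
  have hsplit : (∏ j, Q i j) = (∏ j ∈ (S i)ᶜ, Q i j) * ∏ j ∈ S i, Q i j := by
    rw [Finset.prod_compl_mul_prod]
  rw [hsplit]
  -- expand the product over S i
  have hexp : (∏ j ∈ S i, Q i j)
      = ∑ U ∈ (S i).powerset, ∏ j ∈ U, (Q i j - C (coeff 0 (Q i j))) := by
    have : ∀ j ∈ S i, Q i j = (Q i j - C (coeff 0 (Q i j))) + 1 := by
      intro j hj
      rw [(hS i j).mp hj]
      ring_nf
      simp
    rw [Finset.prod_congr rfl this, Finset.prod_add]
    simp
  rw [hexp, Finset.sum_powerset]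
  -- compare the two truncations
  set f : ℕ → MvPolynomial (Fin N) F :=
    fun l => ∑ U ∈ Finset.powersetCard l (S i), ∏ j ∈ U, (Q i j - C (coeff 0 (Q i j)))
  set A := ∏ j ∈ (S i)ᶜ, Q i j
  have hf_zero : ∀ l, (S i).card < l → f l = 0 := by
    intro l hl
    simp only [f]
    rw [Finset.powersetCard_eq_empty.mpr hl, Finset.sum_empty]
  have hhc_zero : ∀ l, n < l → homogeneousComponent n (A * f l) = 0 := by
    intro l hl
    simp only [f, Finset.mul_sum, map_sum]
    apply Finset.sum_eq_zero
    intro U hU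
    have hcard : U.card = l := (Finset.mem_powersetCard.mp hU).2
    apply aux_homComp_mul_prod_zero
    · intro j hj
      have hjS : j ∈ S i := (Finset.mem_powersetCard.mp hU).1 hj
      simp [(hS i j).mp hjS]
    · omega
  -- extend both to range (max n (card S i) + 1)
  set M := max n (S i).card with hM
  have hMn : n ≤ M := le_max_left _ _
  have hMS : (S i).card ≤ M := le_max_right _ _
  have h1 : homogeneousComponent n (A * ∑ l ∈ Finset.range ((S i).card + 1), f l)
      = homogeneousComponent n (A * ∑ l ∈ Finset.range (M + 1), f l) := by
    congr 1
    congr 1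
    apply Finset.sum_subset
    · exact Finset.range_subset_range.mpr (by omega)
    · intro l hl hl'
      rw [Finset.mem_range] at hl
      rw [Finset.mem_range, not_lt] at hl'
      exact hf_zero l (by omega)
  have h2 : homogeneousComponent n (A * ∑ l ∈ Finset.range (n + 1), f l)
      = homogeneousComponent n (A * ∑ l ∈ Finset.range (M + 1), f l) := by
    simp only [Finset.mul_sum, map_sum]
    apply Finset.sum_subset
    · exact Finset.range_subset_range.mpr (by omega)
    · intro l hl hl'
      rw [Finset.mem_range] at hl
      rw [Finset.mem_range, not_lt] at hl'
      exact hhc_zero l (by omega)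
  rw [h1, ← h2]
end

section
/- Let 0 ≤ μ < 1, δ = (1−μ)/2, s ≥ 1 an integer, and let Q_{ij} ∈ F[X_1,…,X_N] for i ∈ {1,…,T}, j ∈ {1,…,d} be polynomials each depending on at most N^μ variables, with T·d ≤ N^{δs/4}. Let B be the set of all multilinear monomials of support exactly s all of whose variables occur in a single Q_{ij}. Let V be a random subset of the variables {X_1,…,X_N} in which each variable is included independently with probability p = N^{−μ−δ}. Then the probability that at least one monomial of B has all its variables in V is at most N^{−(3/4)·δ·s}. -/
open MvPolynomial

/-- Probability, under the product distribution where each variable is kept alive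
independently with probability `p`, of the event `E` of subsets of the variables. -/
noncomputable def restrictProb (σ : Type*) [Fintype σ] (p : ℝ) (E : Finset σ → Prop) : ℝ := by
  classical
  exact ∑ V : Finset σ, if E V then p ^ V.card * (1 - p) ^ (Fintype.card σ - V.card) else 0

lemma restrictProb_congr {σ : Type*} [Fintype σ] (p : ℝ) {E E' : Finset σ → Prop}
    (h : ∀ V, E V ↔ E' V) : restrictProb σ p E = restrictProb σ p E' := by
  classical
  unfold restrictProb
  exact Finset.sum_congr rfl fun V _ => if_congr (h V) rfl rfl

lemma restrictProb_subset {σ : Type*} [Fintype σ] (p : ℝ) (S : Finset σ) :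
    restrictProb σ p (fun V => S ⊆ V) = p ^ S.card := by
  classical
  unfold restrictProb
  beta_reduce
  trans (∑ V ∈ Finset.univ.filter (fun V : Finset σ => S ⊆ V),
      p ^ V.card * (1 - p) ^ (Fintype.card σ - V.card))
  · rw [Finset.sum_filter]
    exact Finset.sum_congr rfl fun V _ => by split_ifs <;> rfl
  have h1 : ∑ V ∈ Finset.univ.filter (fun V : Finset σ => S ⊆ V),
      p ^ V.card * (1 - p) ^ (Fintype.card σ - V.card)
      = ∑ W ∈ Sᶜ.powerset, p ^ (S ∪ W).card * (1 - p) ^ (Fintype.card σ - (S ∪ W).card) := by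
    refine Finset.sum_nbij' (fun V => V \ S) (fun W => S ∪ W) ?_ ?_ ?_ ?_ ?_
    · intro V hV
      simp only [Finset.mem_filter] at hV
      simp only [Finset.mem_powerset]
      intro x hx
      simp only [Finset.mem_sdiff] at hx
      simpa using hx.2
    · intro W _
      simp [Finset.subset_union_left]
    · intro V hV
      simp only [Finset.mem_filter] at hV
      exact Finset.union_sdiff_of_subset hV.2
    · intro W hW
      simp only [Finset.mem_powerset] at hW
      show (S ∪ W) \ S = W
      rw [Finset.union_sdiff_cancel_left]
      rw [Finset.disjoint_left]
      intro x hx hxW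
      have := hW hxW
      simp at this
      exact this hx
    · intro V hV
      simp only [Finset.mem_filter] at hV
      show _ = p ^ (S ∪ V \ S).card * (1 - p) ^ (Fintype.card σ - (S ∪ V \ S).card)
      rw [Finset.union_sdiff_of_subset hV.2]
  rw [h1]
  have h2 : ∀ W ∈ Sᶜ.powerset,
      p ^ (S ∪ W).card * (1 - p) ^ (Fintype.card σ - (S ∪ W).card)
        = p ^ S.card * (p ^ W.card * (1 - p) ^ (Sᶜ.card - W.card)) := by
    intro W hW
    simp only [Finset.mem_powerset] at hW
    have hdisj : Disjoint S W := by
      rw [Finset.disjoint_left]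
      intro x hx hxW
      have := hW hxW
      simp at this
      exact this hx
    have hcard : (S ∪ W).card = S.card + W.card := Finset.card_union_of_disjoint hdisj
    have hScc : Sᶜ.card = Fintype.card σ - S.card := by
      rw [Finset.card_compl]
    have hSle : S.card ≤ Fintype.card σ := Finset.card_le_univ S
    have hexp : Fintype.card σ - (S.card + W.card) = Sᶜ.card - W.card := by
      rw [hScc]; omega
    rw [hcard, hexp, pow_add, mul_assoc]
  rw [Finset.sum_congr rfl h2, ← Finset.mul_sum]
  have h3 : ∑ W ∈ Sᶜ.powerset, p ^ W.card * (1 - p) ^ (Sᶜ.card - W.card) = 1 := by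
    have hpa := Finset.prod_add (fun _ : σ => p) (fun _ : σ => 1 - p) Sᶜ
    simp only [add_sub_cancel, Finset.prod_const, one_pow] at hpa
    calc ∑ W ∈ Sᶜ.powerset, p ^ W.card * (1 - p) ^ (Sᶜ.card - W.card)
        = ∑ W ∈ Sᶜ.powerset, p ^ W.card * (1 - p) ^ ((Sᶜ \ W).card) :=
          Finset.sum_congr rfl fun W hW => by
            rw [Finset.card_sdiff_of_subset (Finset.mem_powerset.mp hW)]
      _ = 1 := hpa.symm
  rw [h3, mul_one]

lemma restrictProb_union_bound {σ : Type*} [Fintype σ] (p : ℝ) (hp0 : 0 ≤ p) (hp1 : p ≤ 1)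
    {ι : Type*} (A : Finset ι) (E : ι → Finset σ → Prop) :
    restrictProb σ p (fun V => ∃ i ∈ A, E i V) ≤ ∑ i ∈ A, restrictProb σ p (E i) := by
  classical
  unfold restrictProb
  rw [Finset.sum_comm]
  apply Finset.sum_le_sum
  intro V _
  have hnn : ∀ (c : Prop) [Decidable c],
      (0:ℝ) ≤ if c then p ^ V.card * (1 - p) ^ (Fintype.card σ - V.card) else 0 := by
    intro c _
    split
    · exact mul_nonneg (pow_nonneg hp0 _) (pow_nonneg (by linarith) _)
    · exact le_refl 0
  by_cases h : ∃ i ∈ A, E i V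
  · rw [if_pos h]
    obtain ⟨i, hi, hE⟩ := h
    calc p ^ V.card * (1 - p) ^ (Fintype.card σ - V.card)
        = if E i V then p ^ V.card * (1 - p) ^ (Fintype.card σ - V.card) else 0 := by
          rw [if_pos hE]
      _ ≤ _ := Finset.single_le_sum
          (f := fun i => if E i V then p ^ V.card * (1 - p) ^ (Fintype.card σ - V.card) else 0)
          (fun j _ => hnn _) hi
  · rw [if_neg h]
    exact Finset.sum_nonneg fun j _ => hnn _

/-- Let `0 ≤ μ < 1`, `δ = (1-μ)/2`, `s ≥ 1`, and let `Q_{ij}` be polynomials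
each depending on at most `N^μ` variables with `T·d ≤ N^{δs/4}`. Let `B` be the set of
multilinear monomials of support exactly `s` whose variables all occur in a single `Q_{ij}`
(equivalently, the `s`-element subsets of the variables of a single `Q_{ij}`). Under the
random restriction keeping each variable alive independently with probability
`p = N^{-μ-δ}`, the probability that some monomial of `B` survives (has all its variables
alive) is at most `N^{-(3/4)·δ·s}`. -/
theorem stmt8 (F : Type*) [Field F] (N T d s : ℕ) (μ : ℝ)
    (hμ0 : 0 ≤ μ) (hμ1 : μ < 1) (hs : 1 ≤ s)
    (Q : Fin T → Fin d → MvPolynomial (Fin N) F)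
    (hvars : ∀ i j, ((Q i j).vars.card : ℝ) ≤ (N : ℝ) ^ μ)
    (hTd : ((T * d : ℕ) : ℝ) ≤ (N : ℝ) ^ ((1 - μ) / 2 * s / 4)) :
    restrictProb (Fin N) ((N : ℝ) ^ (-μ - (1 - μ) / 2))
        (fun V => ∃ (i : Fin T) (j : Fin d) (S : Finset (Fin N)),
          S.card = s ∧ S ⊆ (Q i j).vars ∧ S ⊆ V) ≤
      (N : ℝ) ^ (-(3 / 4 : ℝ) * ((1 - μ) / 2) * s) := by
  classical
  set δ : ℝ := (1 - μ) / 2 with hδdef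
  have hδ0 : 0 < δ := by rw [hδdef]; linarith
  set p : ℝ := (N : ℝ) ^ (-μ - δ) with hpdef
  rcases Nat.eq_zero_or_pos N with hN | hNpos
  · subst hN
    have hE : restrictProb (Fin 0) p
        (fun V => ∃ (i : Fin T) (j : Fin d) (S : Finset (Fin 0)),
          S.card = s ∧ S ⊆ (Q i j).vars ∧ S ⊆ V) = 0 := by
      unfold restrictProb
      apply Finset.sum_eq_zero
      intro V _
      rw [if_neg]
      rintro ⟨i, j, S, hcard, -, -⟩
      have : S = ∅ := Finset.eq_empty_of_isEmpty S
      rw [this] at hcard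
      simp at hcard
      omega
    rw [hE]
    positivity
  · have hN1 : (1 : ℝ) ≤ (N : ℝ) := by exact_mod_cast hNpos
    have hN0 : (0 : ℝ) < (N : ℝ) := by linarith
    have hp0 : 0 ≤ p := Real.rpow_nonneg (le_of_lt hN0) _
    have hp1 : p ≤ 1 := Real.rpow_le_one_of_one_le_of_nonpos hN1 (by linarith)
    -- index set
    set A : Finset ((_ : Fin T × Fin d) × Finset (Fin N)) :=
      (Finset.univ : Finset (Fin T × Fin d)).sigma
        (fun ij => (Q ij.1 ij.2).vars.powersetCard s) with hAdef
    have hiff : ∀ V : Finset (Fin N),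
        (∃ (i : Fin T) (j : Fin d) (S : Finset (Fin N)),
          S.card = s ∧ S ⊆ (Q i j).vars ∧ S ⊆ V) ↔ ∃ x ∈ A, x.2 ⊆ V := by
      intro V
      constructor
      · rintro ⟨i, j, S, hcard, hsub, hV⟩
        refine ⟨⟨(i, j), S⟩, ?_, hV⟩
        rw [hAdef, Finset.mem_sigma, Finset.mem_powersetCard]
        exact ⟨Finset.mem_univ _, hsub, hcard⟩
      · rintro ⟨⟨⟨i, j⟩, S⟩, hx, hV⟩
        rw [hAdef, Finset.mem_sigma, Finset.mem_powersetCard] at hx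
        exact ⟨i, j, S, hx.2.2, hx.2.1, hV⟩
    rw [restrictProb_congr _ hiff]
    calc restrictProb (Fin N) p (fun V => ∃ x ∈ A, x.2 ⊆ V)
        ≤ ∑ x ∈ A, restrictProb (Fin N) p (fun V => x.2 ⊆ V) :=
          restrictProb_union_bound p hp0 hp1 A _
      _ = ∑ x ∈ A, p ^ x.2.card := by
          exact Finset.sum_congr rfl fun x _ => restrictProb_subset p x.2
      _ = ∑ ij : Fin T × Fin d, ∑ S ∈ (Q ij.1 ij.2).vars.powersetCard s, p ^ S.card := by
          rw [hAdef, Finset.sum_sigma]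
      _ ≤ ∑ ij : Fin T × Fin d, (N : ℝ) ^ (-δ * s) := by
          apply Finset.sum_le_sum
          rintro ⟨i, j⟩ _
          have hcards : ∀ S ∈ (Q i j).vars.powersetCard s, p ^ S.card = p ^ s := by
            intro S hS
            rw [Finset.mem_powersetCard] at hS
            rw [hS.2]
          rw [Finset.sum_congr rfl hcards, Finset.sum_const, Finset.card_powersetCard,
            nsmul_eq_mul]
          have hchoose : (((Q i j).vars.card.choose s : ℕ) : ℝ)
              ≤ ((N : ℝ) ^ μ) ^ s := by
            calc (((Q i j).vars.card.choose s : ℕ) : ℝ)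
                ≤ (((Q i j).vars.card ^ s : ℕ) : ℝ) := by
                  exact_mod_cast Nat.choose_le_pow _ _
              _ = ((Q i j).vars.card : ℝ) ^ s := by push_cast; ring
              _ ≤ ((N : ℝ) ^ μ) ^ s := by
                  apply pow_le_pow_left₀ (by positivity) (hvars i j)
          calc (((Q i j).vars.card.choose s : ℕ) : ℝ) * p ^ s
              ≤ ((N : ℝ) ^ μ) ^ s * p ^ s := by
                apply mul_le_mul_of_nonneg_right hchoose (pow_nonneg hp0 _)
            _ = ((N : ℝ) ^ μ * p) ^ s := by rw [mul_pow]
            _ = ((N : ℝ) ^ (-δ)) ^ s := by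
                rw [hpdef, ← Real.rpow_add hN0]
                ring_nf
            _ = (N : ℝ) ^ (-δ * s) := by
                rw [← Real.rpow_natCast ((N : ℝ) ^ (-δ)) s, ← Real.rpow_mul (le_of_lt hN0)]
      _ = ((T * d : ℕ) : ℝ) * (N : ℝ) ^ (-δ * s) := by
          rw [Finset.sum_const, Finset.card_univ, Fintype.card_prod, Fintype.card_fin, Fintype.card_fin, nsmul_eq_mul]
      _ ≤ (N : ℝ) ^ (δ * s / 4) * (N : ℝ) ^ (-δ * s) := by
          exact mul_le_mul_of_nonneg_right hTd (Real.rpow_nonneg (le_of_lt hN0) _)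
      _ = (N : ℝ) ^ (-(3 / 4 : ℝ) * δ * s) := by
          rw [← Real.rpow_add hN0]
          congr 1
          ring
end

section
/- Let F be a field of characteristic zero and let P ∈ F[X_1,…,X_N] be a nonzero polynomial of individual degree at most k in every variable, with P = ∑_{i=1}^{T} ∏_{j=1}^{d} Q_{ij} where each Q_{ij} depends on at most s variables. Then: (1) for every variable y ∈ {X_1,…,X_N} and every integer 1 ≤ r ≤ k, the partial derivative ∂^r P/∂y^r can be written as ∑_{i=1}^{T'} ∏_{j=1}^{d} Q'_{ij} with T' ≤ T·(k+1)² and each Q'_{ij} depending on at most s variables; and (2) for every a ∈ F^N, the translate P(X̄ + ā) can be written as ∑_{i=1}^{T} ∏_{j=1}^{d} Q''_{ij} with each Q''_{ij} depending on at most s variables. -/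
open MvPolynomial

section Helpers
variable {F : Type*} [Field F] [CharZero F] {N : ℕ}

lemma iterL (y : Fin N) (r : ℕ) (u : Fin N →₀ ℕ) (c : F) :
    (fun R => pderiv y R)^[r] (monomial u c)
      = monomial (u - Finsupp.single y r) (c * ((u y).descFactorial r : F)) := by
  induction r with
  | zero => simp
  | succ n ih =>
    rw [Function.iterate_succ_apply', ih, pderiv_monomial]
    rw [tsub_tsub, ← Finsupp.single_add]
    congr 1
    rw [Finsupp.tsub_apply, Finsupp.single_eq_same, Nat.descFactorial_succ]
    push_cast
    ring

set_option linter.unusedSectionVars false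

lemma subM (y : Fin N) (t : F) (u : Fin N →₀ ℕ) (c : F) :
    aeval (fun v => if v = y then C t else X v) (monomial u c)
      = C (t ^ u y) * monomial (u.erase y) c := by
  conv_lhs => rw [show u = Finsupp.single y (u y) + u.erase y from (Finsupp.single_add_erase y u).symm]
  rw [show (monomial (Finsupp.single y (u y) + u.erase y) c : MvPolynomial (Fin N) F)
      = monomial (Finsupp.single y (u y)) 1 * monomial (u.erase y) c by
    rw [monomial_mul, one_mul]]
  rw [map_mul]
  congr 1
  · rw [aeval_monomial, Finsupp.prod_single_index (by simp), if_pos rfl, map_one, one_mul, map_pow]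
  · rw [aeval_monomial, Finsupp.prod]
    rw [Finset.prod_congr rfl (fun v hv => ?_), monomial_eq, Finsupp.prod]
    · rfl
    · rw [if_neg]
      have := Finsupp.support_erase (a := y) (f := u) ▸ hv
      exact Finset.ne_of_mem_erase this

lemma subId (y : Fin N) (t : F) (Q : MvPolynomial (Fin N) F) (h : y ∉ Q.vars) :
    aeval (fun v => if v = y then C t else X v) Q = Q := by
  conv_lhs => rw [Q.as_sum]
  rw [map_sum]
  conv_rhs => rw [Q.as_sum]
  refine Finset.sum_congr rfl fun u hu => ?_
  have hy : u y = 0 := by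
    by_contra h0
    exact h ((mem_vars y).2 ⟨u, hu, Finsupp.mem_support_iff.2 h0⟩)
  rw [subM, hy, pow_zero, map_one, one_mul, Finsupp.erase_of_notMem_support
    (by simp [Finsupp.mem_support_iff, hy])]

lemma vand (k : ℕ) : ∃ L : Fin (k+1) → Fin (k+1) → F,
    ∀ m e : Fin (k+1), (∑ t, L m t * ((t : ℕ) : F) ^ (e : ℕ)) = if m = e then 1 else 0 := by
  set v : Fin (k+1) → F := fun t => ((t : ℕ) : F) with hv
  have hinj : Function.Injective v := fun a b h => Fin.ext (Nat.cast_injective h)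
  have hdet : (Matrix.vandermonde v).det ≠ 0 := Matrix.det_vandermonde_ne_zero_iff.mpr hinj
  refine ⟨fun m t => (Matrix.vandermonde v)⁻¹ m t, fun m e => ?_⟩
  have h := Matrix.nonsing_inv_mul (Matrix.vandermonde v) (isUnit_iff_ne_zero.mpr hdet)
  have h2 := congrFun (congrFun h m) e
  rw [Matrix.mul_apply, Matrix.one_apply] at h2
  simpa [Matrix.vandermonde_apply, hv] using h2

lemma keyM (y : Fin N) (k r : ℕ) (L : Fin (k+1) → Fin (k+1) → F)
    (hL : ∀ m e : Fin (k+1), (∑ t, L m t * ((t : ℕ) : F) ^ (e : ℕ)) = if m = e then 1 else 0)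
    (u : Fin N →₀ ℕ) (c : F) (hu : u y ≤ k) :
    (fun R => pderiv y R)^[r] (monomial u c)
      = ∑ m : Fin (k+1), ∑ t : Fin (k+1),
          C ((Nat.descFactorial (m : ℕ) r : F) * L m t) * X y ^ ((m : ℕ) - r) *
            aeval (fun v => if v = y then C ((t : ℕ) : F) else X v) (monomial u c) := by
  have he : (u y) < k + 1 := Nat.lt_succ_of_le hu
  set e : Fin (k+1) := ⟨u y, he⟩ with hedef
  have hsupp : u - Finsupp.single y r = Finsupp.single y (u y - r) + u.erase y := by
    ext v
    by_cases hv : v = y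
    · subst hv; simp [Finsupp.tsub_apply]
    · simp [Finsupp.tsub_apply, Finsupp.single_apply, Ne.symm hv, Finsupp.erase_ne hv]
  calc (fun R => pderiv y R)^[r] (monomial u c)
      = monomial (u - Finsupp.single y r) (c * ((u y).descFactorial r : F)) := iterL y r u c
    _ = C ((Nat.descFactorial (u y) r : F)) * X y ^ (u y - r) * monomial (u.erase y) c := by
        rw [hsupp, X_pow_eq_monomial, C_mul_monomial, monomial_mul, mul_one]
        ring_nf
    _ = ∑ m : Fin (k+1), C ((Nat.descFactorial (m:ℕ) r : F)) * X y ^ ((m:ℕ) - r) *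
          (C (if m = e then (1:F) else 0) * monomial (u.erase y) c) := by
        rw [Finset.sum_eq_single e (fun m _ hm => by simp [if_neg hm]) (by simp)]
        simp [hedef, mul_assoc]
    _ = _ := by
        refine Finset.sum_congr rfl fun m _ => ?_
        simp only [subM]
        rw [← hL m e, map_sum, Finset.sum_mul, Finset.mul_sum]
        refine Finset.sum_congr rfl fun t _ => ?_
        rw [map_mul, map_mul]
        rw [show ((e : ℕ)) = u y from rfl]
        ring

lemma iter_sum (y : Fin N) (r : ℕ) {ι : Type*} (s : Finset ι)
    (g : ι → MvPolynomial (Fin N) F) :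
    (fun R => pderiv y R)^[r] (∑ u ∈ s, g u) = ∑ u ∈ s, (fun R => pderiv y R)^[r] (g u) := by
  induction r with
  | zero => simp
  | succ n ih =>
    rw [Function.iterate_succ_apply', ih, map_sum]
    exact Finset.sum_congr rfl fun u _ => (Function.iterate_succ_apply' _ n _).symm

lemma keyP (y : Fin N) (k r : ℕ) (L : Fin (k+1) → Fin (k+1) → F)
    (hL : ∀ m e : Fin (k+1), (∑ t, L m t * ((t : ℕ) : F) ^ (e : ℕ)) = if m = e then 1 else 0)
    (P : MvPolynomial (Fin N) F) (hdeg : P.degreeOf y ≤ k) :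
    (fun R => pderiv y R)^[r] P
      = ∑ m : Fin (k+1), ∑ t : Fin (k+1),
          C ((Nat.descFactorial (m : ℕ) r : F) * L m t) * X y ^ ((m : ℕ) - r) *
            aeval (fun v => if v = y then C ((t : ℕ) : F) else X v) P := by
  have hu : ∀ u ∈ P.support, u y ≤ k := degreeOf_le_iff.mp hdeg
  conv_lhs => rw [P.as_sum]
  conv_rhs => rw [P.as_sum]
  rw [iter_sum]
  rw [Finset.sum_congr rfl fun u hu' => keyM y k r L hL u (coeff u P) (hu u hu')]
  rw [Finset.sum_comm]
  refine Finset.sum_congr rfl fun m _ => ?_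
  rw [Finset.sum_comm]
  refine Finset.sum_congr rfl fun t _ => ?_
  rw [map_sum, Finset.mul_sum]

lemma vars_subst (y : Fin N) (t : F) (Q : MvPolynomial (Fin N) F) :
    (aeval (fun v => if v = y then C t else X v) Q).vars ⊆ Q.vars.erase y := by
  intro x hx
  have h1 : (aeval (fun v => if v = y then C t else X v) Q) =
      bind₁ (fun v => if v = y then C t else X v) Q := rfl
  rw [h1] at hx
  have h2 := vars_bind₁ (fun v => if v = y then C t else X v) Q hx
  rw [Finset.mem_biUnion] at h2
  obtain ⟨v, hv, hxv⟩ := h2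
  by_cases hvy : v = y
  · simp [hvy, vars_C] at hxv
  · simp only [if_neg hvy, vars_X, Finset.mem_singleton] at hxv
    subst hxv
    exact Finset.mem_erase.2 ⟨hvy, hv⟩

lemma vars_shift (a : Fin N → F) (Q : MvPolynomial (Fin N) F) :
    (aeval (fun v => X v + C (a v)) Q).vars ⊆ Q.vars := by
  intro x hx
  have h1 : (aeval (fun v => X v + C (a v)) Q) = bind₁ (fun v => X v + C (a v)) Q := rfl
  rw [h1] at hx
  have h2 := vars_bind₁ (fun v => X v + C (a v)) Q hx
  rw [Finset.mem_biUnion] at h2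
  obtain ⟨v, hv, hxv⟩ := h2
  have : (X v + C (a v) : MvPolynomial (Fin N) F).vars ⊆ {v} := by
    refine (vars_add_subset _ _).trans ?_
    rw [vars_X, vars_C]
    simp
  have := this hxv
  rw [Finset.mem_singleton] at this
  subst this; exact hv

lemma badsum (y : Fin N) (k r : ℕ) (hr : 1 ≤ r) (L : Fin (k+1) → Fin (k+1) → F)
    (hL : ∀ m e : Fin (k+1), (∑ t, L m t * ((t : ℕ) : F) ^ (e : ℕ)) = if m = e then 1 else 0)
    (B : MvPolynomial (Fin N) F) :
    ∑ m : Fin (k+1), ∑ t : Fin (k+1),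
      C ((Nat.descFactorial (m : ℕ) r : F) * L m t) * X y ^ ((m : ℕ) - r) * B = 0 := by
  have h1 : ∀ m : Fin (k+1), ∑ t : Fin (k+1),
      C ((Nat.descFactorial (m : ℕ) r : F) * L m t) * X y ^ ((m : ℕ) - r) * B
      = C (if m = 0 then (1:F) else 0) *
          (C ((Nat.descFactorial (m : ℕ) r : F)) * X y ^ ((m : ℕ) - r) * B) := by
    intro m
    have h0 : ∑ t : Fin (k+1), L m t = if m = 0 then (1:F) else 0 := by
      simpa using hL m 0
    calc ∑ t : Fin (k+1), C ((Nat.descFactorial (m : ℕ) r : F) * L m t) * X y ^ ((m : ℕ) - r) * B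
        = ∑ t : Fin (k+1), C (L m t) *
            (C ((Nat.descFactorial (m : ℕ) r : F)) * X y ^ ((m : ℕ) - r) * B) := by
          refine Finset.sum_congr rfl fun t _ => ?_
          rw [map_mul]; ring
      _ = C (∑ t : Fin (k+1), L m t) *
            (C ((Nat.descFactorial (m : ℕ) r : F)) * X y ^ ((m : ℕ) - r) * B) := by
          rw [map_sum, Finset.sum_mul]
      _ = _ := by rw [h0]
  rw [Finset.sum_congr rfl fun m _ => h1 m]
  rw [Finset.sum_eq_single 0 (fun m _ hm => by rw [if_neg hm, map_zero, zero_mul]) (by simp)]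
  rw [if_pos rfl]
  have : Nat.descFactorial ((0 : Fin (k+1)) : ℕ) r = 0 := by
    rw [Fin.val_zero]
    exact Nat.descFactorial_eq_zero_iff_lt.2 hr
  rw [this]
  simp

open scoped Classical in
noncomputable def Gaux {F : Type*} [Field F] {N : ℕ} (y : Fin N) (k r d T : ℕ)
    (L : Fin (k+1) → Fin (k+1) → F) (Q : Fin T → Fin d → MvPolynomial (Fin N) F)
    (i : Fin T) (m t : Fin (k+1)) (j : Fin d) : MvPolynomial (Fin N) F :=
  if h : ∃ j', y ∈ (Q i j').vars then
    (if j = h.choose then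
        C ((Nat.descFactorial (m : ℕ) r : F) * L m t) * X y ^ ((m : ℕ) - r) else 1) *
      aeval (fun v => if v = y then C ((t : ℕ) : F) else X v) (Q i j)
  else 0

end Helpers

set_option maxHeartbeats 1000000 in
/-- Let `P ∈ F[X_1,…,X_N]` be nonzero of individual degree at most `k`
with `P = ∑_{i=1}^T ∏_{j=1}^d Q_{ij}`, each `Q_{ij}` depending on at most `s` variables.
Then: (1) for every variable `y` and every `1 ≤ r ≤ k`, `∂^r P/∂y^r` has a representation
`∑_{i=1}^{T'} ∏_{j=1}^d Q'_{ij}` with `T' ≤ T·(k+1)²` and each `Q'_{ij}` depending on at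
most `s` variables; and (2) for every `a ∈ F^N`, `P(X̄ + ā)` has a representation
`∑_{i=1}^{T} ∏_{j=1}^d Q''_{ij}` with each `Q''_{ij}` depending on at most `s` variables. -/
theorem stmt14 (F : Type*) [Field F] [CharZero F] (N k T d s : ℕ)
    (P : MvPolynomial (Fin N) F) (hP0 : P ≠ 0)
    (hdeg : ∀ v : Fin N, P.degreeOf v ≤ k)
    (Q : Fin T → Fin d → MvPolynomial (Fin N) F)
    (hrep : P = ∑ i, ∏ j, Q i j)
    (hvars : ∀ i j, (Q i j).vars.card ≤ s) :
    (∀ y : Fin N, ∀ r : ℕ, 1 ≤ r → r ≤ k →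
      ∃ T' : ℕ, T' ≤ T * (k + 1) ^ 2 ∧
      ∃ Q' : Fin T' → Fin d → MvPolynomial (Fin N) F,
        (∀ i j, (Q' i j).vars.card ≤ s) ∧
        (fun R => pderiv y R)^[r] P = ∑ i, ∏ j, Q' i j) ∧
    (∀ a : Fin N → F,
      ∃ Q'' : Fin T → Fin d → MvPolynomial (Fin N) F,
        (∀ i j, (Q'' i j).vars.card ≤ s) ∧
        aeval (fun v => X v + C (a v)) P = ∑ i, ∏ j, Q'' i j) := by
  classical
  constructor
  · intro y r hr1 hrk
    obtain ⟨L, hL⟩ := vand (F := F) k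
    by_cases hd : d = 0
    · subst hd
      refine ⟨0, Nat.zero_le _, fun _ _ => 0, fun i j => by simp [vars_0], ?_⟩
      have hP : P = C (T : F) := by
        rw [hrep]
        simp [Finset.univ_eq_empty, map_natCast]
      obtain ⟨r', rfl⟩ : ∃ r', r = r' + 1 := ⟨r - 1, (Nat.succ_pred_eq_of_pos hr1).symm⟩
      rw [Function.iterate_succ_apply, hP, pderiv_C, Function.iterate_fixed (map_zero _)]
      simp
    · have hd0 : 0 < d := Nat.pos_of_ne_zero hd
      refine ⟨T * (k+1)^2, le_refl _, ?_⟩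
      let e : Fin T × (Fin (k+1) × Fin (k+1)) ≃ Fin (T * (k+1)^2) :=
        ((Equiv.prodCongr (Equiv.refl (Fin T)) finProdFinEquiv).trans finProdFinEquiv).trans
          (finCongr (by ring))
      refine ⟨fun i' j => Gaux y k r d T L Q (e.symm i').1 (e.symm i').2.1 (e.symm i').2.2 j,
        ?_, ?_⟩
      · intro i' j
        dsimp only
        generalize (e.symm i') = p
        obtain ⟨i, m, t⟩ := p
        by_cases h : ∃ j', y ∈ (Q i j').vars
        · rw [Gaux, dif_pos h]
          by_cases hjj : j = h.choose
          · rw [if_pos hjj, hjj]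
            have hj0 : y ∈ (Q i h.choose).vars := h.choose_spec
            refine le_trans (Finset.card_le_card ?_) (hvars i h.choose)
            intro x hx
            rcases Finset.mem_union.1 (vars_mul _ _ hx) with h1 | h2
            · rcases Finset.mem_union.1 (vars_mul _ _ h1) with ha | hb
              · rw [vars_C] at ha; exact absurd ha (Finset.notMem_empty x)
              · have hxy := vars_pow _ _ hb
                rw [vars_X, Finset.mem_singleton] at hxy
                subst hxy; exact hj0
            · exact Finset.erase_subset _ _ (vars_subst _ _ _ h2)
          · rw [if_neg hjj, one_mul]
            exact le_trans (Finset.card_le_card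
              ((vars_subst y _ (Q i j)).trans (Finset.erase_subset _ _))) (hvars i j)
        · rw [Gaux, dif_neg h]; simp
      · have hsum0 : (∑ i' : Fin (T * (k+1)^2),
            ∏ j, Gaux y k r d T L Q (e.symm i').1 (e.symm i').2.1 (e.symm i').2.2 j)
            = ∑ p : Fin T × (Fin (k+1) × Fin (k+1)), ∏ j, Gaux y k r d T L Q p.1 p.2.1 p.2.2 j :=
          Equiv.sum_comp e.symm (fun p => ∏ j, Gaux y k r d T L Q p.1 p.2.1 p.2.2 j)
        rw [hsum0]
        simp only [Fintype.sum_prod_type]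
        rw [keyP y k r L hL P (hdeg y)]
        have hS : ∀ t : F, aeval (fun v => if v = y then C t else X v) P
            = ∑ i, ∏ j, aeval (fun v => if v = y then C t else X v) (Q i j) := by
          intro t; rw [hrep, map_sum]
          exact Finset.sum_congr rfl fun i _ => map_prod _ _ _
        simp only [hS]
        simp only [Finset.mul_sum]
        rw [Finset.sum_congr rfl fun m (_ : m ∈ Finset.univ) => Finset.sum_comm]
        rw [Finset.sum_comm]
        refine Finset.sum_congr rfl fun i _ => ?_
        by_cases h : ∃ j', y ∈ (Q i j').vars
        · refine Finset.sum_congr rfl fun m _ => Finset.sum_congr rfl fun t _ => ?_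
          rw [Finset.prod_congr rfl fun j (_ : j ∈ Finset.univ) =>
            show Gaux y k r d T L Q i m t j
              = (if j = h.choose then
                  C ((Nat.descFactorial (m : ℕ) r : F) * L m t) * X y ^ ((m : ℕ) - r) else 1) *
                aeval (fun v => if v = y then C ((t : ℕ) : F) else X v) (Q i j) from by
              rw [Gaux, dif_pos h]]
          rw [Finset.prod_mul_distrib, Finset.prod_ite_eq' Finset.univ h.choose,
            if_pos (Finset.mem_univ _)]
        · have hG0 : ∀ m t : Fin (k+1), ∏ j, Gaux y k r d T L Q i m t j = 0 := by
            intro m t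
            rw [Finset.prod_congr rfl fun j (_ : j ∈ Finset.univ) =>
              show Gaux y k r d T L Q i m t j = 0 from by rw [Gaux, dif_neg h]]
            rw [Finset.prod_const]
            simp [Finset.card_univ, hd]
          push_neg at h
          have hQ : ∀ (t : F) (j : Fin d),
              aeval (fun v => if v = y then C t else X v) (Q i j) = Q i j :=
            fun t j => subId y t (Q i j) (h j)
          simp only [hQ, hG0]
          rw [badsum y k r hr1 L hL]
          simp
  · intro a
    refine ⟨fun i j => aeval (fun v => X v + C (a v)) (Q i j),
      fun i j => le_trans (Finset.card_le_card (vars_shift a (Q i j))) (hvars i j), ?_⟩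
    rw [hrep, map_sum]
    exact Finset.sum_congr rfl fun i _ => map_prod _ _ _
end

section
/- Let F be a field of characteristic zero, let P ∈ F[X_1,…,X_N, Y] be a nonzero polynomial of degree at most k in Y, and let f ∈ F[X_1,…,X_N] be such that P(X_1,…,X_N, f) = 0 and (∂P/∂Y)(0,…,0, f(0,…,0)) ≠ 0. Write P = ∑_{i=0}^{k} C_i(X_1,…,X_N)·Y^i. Then for every integer t ≥ 0 there exists a polynomial R_t ∈ F[Z_0, Z_1, …, Z_k] of degree at most t such that Hom^{≤t}[f] = Hom^{≤t}[R_t(C_0, C_1, …, C_k)]. -/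
open MvPolynomial

/-- The sum of the homogeneous components of `P` of degree at most `t`. -/
noncomputable def homLE {F : Type*} [CommSemiring F] {σ : Type*} (t : ℕ)
    (P : MvPolynomial σ F) : MvPolynomial σ F :=
  ∑ i ∈ Finset.range (t + 1), homogeneousComponent i P

namespace Stmt15Aux

variable {F : Type*} [CommRing F] {σ : Type*}

/-- `p` has no monomials of degree `< d`. -/
def lvlt (d : ℕ) (p : MvPolynomial σ F) : Prop :=
  ∀ m : σ →₀ ℕ, m.degree < d → coeff m p = 0

lemma lvlt_mono {d d' : ℕ} (h : d' ≤ d) {p : MvPolynomial σ F} (hp : lvlt d p) : lvlt d' p :=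
  fun m hm => hp m (lt_of_lt_of_le hm h)

lemma lvlt_zero (p : MvPolynomial σ F) : lvlt 0 p :=
  fun _ hm => absurd hm (Nat.not_lt_zero _)

lemma lvlt_add {d : ℕ} {p q : MvPolynomial σ F} (hp : lvlt d p) (hq : lvlt d q) :
    lvlt d (p + q) := by
  intro m hm; rw [coeff_add, hp m hm, hq m hm, add_zero]

lemma lvlt_neg {d : ℕ} {p : MvPolynomial σ F} (hp : lvlt d p) : lvlt d (-p) := by
  intro m hm; rw [coeff_neg, hp m hm, neg_zero]

lemma lvlt_sum {ι : Type*} {s : Finset ι} {d : ℕ} {g : ι → MvPolynomial σ F}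
    (h : ∀ i ∈ s, lvlt d (g i)) : lvlt d (∑ i ∈ s, g i) := by
  intro m hm
  rw [coeff_sum]
  exact Finset.sum_eq_zero fun i hi => h i hi m hm

lemma degree_add (a b : σ →₀ ℕ) : (a + b).degree = a.degree + b.degree := by
  simp [Finsupp.degree_eq_weight_one]

lemma lvlt_mul {d e : ℕ} {p q : MvPolynomial σ F} (hp : lvlt d p) (hq : lvlt e q) :
    lvlt (d + e) (p * q) := by
  classical
  intro m hm
  rw [coeff_mul]
  apply Finset.sum_eq_zero
  rintro ⟨a, b⟩ hab
  rw [Finset.HasAntidiagonal.mem_antidiagonal] at hab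
  have hdeg : a.degree + b.degree < d + e := by
    rw [← degree_add, hab]; exact hm
  rcases lt_or_ge a.degree d with h | h
  · rw [hp a h, zero_mul]
  · rw [hq b (by omega), mul_zero]

lemma lvlt_mul_left {d : ℕ} (p : MvPolynomial σ F) {q : MvPolynomial σ F} (hq : lvlt d q) :
    lvlt d (p * q) := by
  simpa using lvlt_mul (lvlt_zero p) hq

lemma lvlt_pow {p : MvPolynomial σ F} (hp : lvlt 1 p) (n : ℕ) : lvlt n (p ^ n) := by
  induction n with
  | zero => exact lvlt_zero _
  | succ n ih =>
    rw [pow_succ]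
    exact lvlt_mul ih hp

lemma lvlt_prod_pow {ι : Type*} (s : Finset ι) (D : ι → MvPolynomial σ F)
    (hD : ∀ i, lvlt 1 (D i)) (n : ι → ℕ) :
    lvlt (∑ i ∈ s, n i) (∏ i ∈ s, D i ^ n i) := by
  induction s using Finset.cons_induction with
  | empty => simpa using lvlt_zero (1 : MvPolynomial σ F)
  | cons i s hi ih =>
    rw [Finset.prod_cons, Finset.sum_cons]
    exact lvlt_mul (lvlt_pow (hD i) _) ih

lemma coeff_homLE (t : ℕ) (p : MvPolynomial σ F) (m : σ →₀ ℕ) :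
    coeff m (homLE t p) = if m.degree ≤ t then coeff m p else 0 := by
  rw [homLE, coeff_sum]
  simp only [coeff_homogeneousComponent]
  rw [Finset.sum_ite_eq]
  simp [Nat.lt_succ_iff]

lemma homLE_eq_iff {t : ℕ} {f g : MvPolynomial σ F} :
    homLE t f = homLE t g ↔ lvlt (t + 1) (f - g) := by
  constructor
  · intro h m hm
    have h2 := congrArg (coeff m) h
    rw [coeff_homLE, coeff_homLE, if_pos (by omega), if_pos (by omega)] at h2
    rw [coeff_sub, h2, sub_self]
  · intro h
    apply MvPolynomial.ext
    intro m
    rw [coeff_homLE, coeff_homLE]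
    split
    · next hle =>
      have h2 := h m (by omega)
      rw [coeff_sub, sub_eq_zero] at h2
      exact h2
    · rfl

lemma lvlt_aeval {k : ℕ} {D : Fin k → MvPolynomial σ F} (hD : ∀ i, lvlt 1 (D i))
    {s : ℕ} {q : MvPolynomial (Fin k) F} (hq : lvlt s q) : lvlt s (aeval D q) := by
  rw [aeval_def, eval₂_eq]
  apply lvlt_sum
  intro m hm
  rcases lt_or_ge m.degree s with h | h
  · have : coeff m q = 0 := hq m h
    rw [mem_support_iff] at hm
    exact absurd this hm
  · apply lvlt_mul_left
    apply lvlt_mono h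
    exact lvlt_prod_pow m.support D hD m

lemma totalDegree_aeval_le {τ : Type*} {k : ℕ} (u : Fin k → MvPolynomial τ F)
    (hu : ∀ i, (u i).totalDegree ≤ 1) (p : MvPolynomial (Fin k) F) :
    (aeval u p).totalDegree ≤ p.totalDegree := by
  rw [aeval_def, eval₂_eq]
  apply (totalDegree_finset_sum _ _).trans
  apply Finset.sup_le
  intro m hm
  calc ((algebraMap F (MvPolynomial τ F)) (coeff m p) * ∏ i ∈ m.support, u i ^ m i).totalDegree
      ≤ ((algebraMap F (MvPolynomial τ F)) (coeff m p)).totalDegree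
        + (∏ i ∈ m.support, u i ^ m i).totalDegree := totalDegree_mul _ _
    _ ≤ 0 + ∑ i ∈ m.support, (u i ^ m i).totalDegree := by
        gcongr
        · rw [algebraMap_eq]; exact le_of_eq (totalDegree_C _)
        · exact totalDegree_finset_prod _ _
    _ ≤ ∑ i ∈ m.support, m i := by
        rw [zero_add]
        apply Finset.sum_le_sum
        intro i _
        exact (totalDegree_pow _ _).trans (by
          calc m i * (u i).totalDegree ≤ m i * 1 := by gcongr; exact hu i
            _ = m i := mul_one _)
    _ ≤ p.totalDegree := le_totalDegree hm

lemma totalDegree_homLE (s : ℕ) (p : MvPolynomial σ F) : (homLE s p).totalDegree ≤ s := by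
  rw [homLE]
  apply (totalDegree_finset_sum _ _).trans
  apply Finset.sup_le
  intro i hi
  rw [Finset.mem_range] at hi
  exact (homogeneousComponent_isHomogeneous i p).totalDegree_le.trans (by omega)

/-- Truncation: any substitution instance can be matched, up to degree `s`, by the
substitution instance of a polynomial of total degree at most `s`. -/
lemma truncation [Nontrivial F] {k : ℕ} (Cs : Fin k → MvPolynomial σ F) (s : ℕ) (R : MvPolynomial (Fin k) F) :
    ∃ R' : MvPolynomial (Fin k) F, R'.totalDegree ≤ s ∧
      lvlt (s + 1) (aeval Cs R - aeval Cs R') := by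
  classical
  set c : Fin k → F := fun i => constantCoeff (Cs i) with hc
  set Q : MvPolynomial (Fin k) F := aeval (fun i => X i + C (c i)) R with hQ
  set D : Fin k → MvPolynomial σ F := fun i => Cs i - C (c i) with hD
  refine ⟨aeval (fun i => X i - C (c i)) (homLE s Q), ?_, ?_⟩
  · apply (totalDegree_aeval_le _ ?_ _).trans (totalDegree_homLE s Q)
    intro i
    calc (X i - C (c i)).totalDegree = (X i + C (-c i)).totalDegree := by
          rw [sub_eq_add_neg, ← C_neg]
      _ ≤ max (X i : MvPolynomial (Fin k) F).totalDegree (C (-c i)).totalDegree :=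
          totalDegree_add _ _
      _ ≤ 1 := by
          rw [totalDegree_X, totalDegree_C]; omega
  · have e1 : (fun i => aeval Cs (X i - C (c i))) = D := by
      funext i
      simp [hD, algebraMap_eq]
    have e2 : (fun i => aeval D (X i + C (c i))) = Cs := by
      funext i
      simp [hD, algebraMap_eq]
    have h1 : aeval Cs (aeval (fun i => X i - C (c i)) (homLE s Q)) = aeval D (homLE s Q) := by
      rw [comp_aeval_apply, e1]
    have h2 : aeval Cs R = aeval D Q := by
      rw [hQ, comp_aeval_apply, e2]
    rw [h1, h2, ← map_sub]
    apply lvlt_aeval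
    · intro i m hm
      have hm0 : m = 0 := by
        rwa [Nat.lt_one_iff, Finsupp.degree_eq_zero_iff] at hm
      subst hm0
      simp [hD, ← constantCoeff_eq, hc]
    · intro m hm
      rw [coeff_sub, coeff_homLE, if_pos (by omega), sub_self]

/-- The Newton iteration step. -/
lemma newton {F : Type*} [Field F] {σ : Type*} (P : Polynomial (MvPolynomial σ F))
    (f g : MvPolynomial σ F) (t : ℕ) (hroot : P.eval f = 0) (hfg : lvlt (t + 1) (f - g))
    (hc : constantCoeff (P.derivative.eval g) ≠ 0) :
    lvlt (t + 2)
      (f - (g - C (constantCoeff (P.derivative.eval g))⁻¹ * P.eval g)) := by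
  set c : F := constantCoeff (P.derivative.eval g) with hcdef
  set e : MvPolynomial σ F := f - g with he
  obtain ⟨S, hS⟩ := P.binomExpansion g e
  rw [show g + e = f by rw [he]; ring, hroot] at hS
  set h : MvPolynomial σ F := P.derivative.eval g - C c with hh
  have hinv : (C c⁻¹ : MvPolynomial σ F) * C c = 1 := by
    rw [← C_mul, inv_mul_cancel₀ hc, C_1]
  have key : f - (g - C c⁻¹ * P.eval g)
      = -(C c⁻¹ * (h * e)) - C c⁻¹ * (S * e ^ 2) := by
    have hhe : P.derivative.eval g = h + C c := by rw [hh]; ring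
    have hPg : P.eval g = -((h + C c) * e) - S * e ^ 2 := by
      linear_combination -hS - e * hhe
    rw [hPg]
    have hfge : f - g = e := he.symm
    linear_combination hfge - e * hinv
  rw [key, sub_eq_add_neg]
  apply lvlt_add
  · apply lvlt_neg
    apply lvlt_mul_left
    have : lvlt 1 h := by
      intro m hm
      have hm0 : m = 0 := by
        rwa [Nat.lt_one_iff, Finsupp.degree_eq_zero_iff] at hm
      subst hm0
      simp [hh, ← constantCoeff_eq, hcdef]
    exact lvlt_mono (by omega) (lvlt_mul this hfg)
  · apply lvlt_neg
    apply lvlt_mul_left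
    apply lvlt_mul_left
    apply lvlt_mono (show t + 2 ≤ (t + 1) + (t + 1) by omega)
    rw [pow_two]
    exact lvlt_mul hfg hfg

end Stmt15Aux

open Stmt15Aux

/-- Dvir–Shpilka–Yehudayoff. Let `P ∈ F[X_1,…,X_N, Y]` be a nonzero
polynomial of degree at most `k` in `Y` (viewed as `Polynomial (MvPolynomial (Fin N) F)`
with coefficients `C_i = P.coeff i`), and let `f ∈ F[X_1,…,X_N]` be such that
`P(X_1,…,X_N, f) = 0` and `(∂P/∂Y)(0,…,0, f(0,…,0)) ≠ 0`. Then for every `t ≥ 0` there is a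
polynomial `R_t ∈ F[Z_0,…,Z_k]` of degree at most `t` with
`Hom^{≤t}[f] = Hom^{≤t}[R_t(C_0, C_1, …, C_k)]`. -/
theorem stmt15 (F : Type*) [Field F] [CharZero F] (N k : ℕ)
    (P : Polynomial (MvPolynomial (Fin N) F)) (hP0 : P ≠ 0)
    (hdeg : P.natDegree ≤ k)
    (f : MvPolynomial (Fin N) F)
    (hroot : P.eval f = 0)
    (hderiv : (Polynomial.map (MvPolynomial.eval (fun _ : Fin N => (0 : F)))
        P.derivative).eval (MvPolynomial.eval (fun _ : Fin N => (0 : F)) f) ≠ 0) :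
    ∀ t : ℕ, ∃ R : MvPolynomial (Fin (k + 1)) F, R.totalDegree ≤ t ∧
      homLE t f = homLE t (aeval (fun i : Fin (k + 1) => P.coeff (i : ℕ)) R) := by
  have hderiv' : ∀ g : MvPolynomial (Fin N) F, constantCoeff g = constantCoeff f →
      constantCoeff (P.derivative.eval g) ≠ 0 := by
    intro g hg
    have heval0 : (MvPolynomial.eval (fun _ : Fin N => (0 : F)))
        = (constantCoeff : MvPolynomial (Fin N) F →+* F) := by
      rw [← MvPolynomial.eval_zero']
    rw [heval0] at hderiv
    have : constantCoeff (P.derivative.eval g)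
        = (Polynomial.map (constantCoeff : MvPolynomial (Fin N) F →+* F)
            P.derivative).eval (constantCoeff f) := by
      rw [← hg, Polynomial.eval_map, Polynomial.eval₂_hom]
    rw [this]
    exact hderiv
  intro t
  induction t with
  | zero =>
    refine ⟨MvPolynomial.C (constantCoeff f), by simp, ?_⟩
    rw [homLE_eq_iff]
    intro m hm
    have hm0 : m = 0 := by
      rwa [Nat.lt_one_iff, Finsupp.degree_eq_zero_iff] at hm
    subst hm0
    simp [← constantCoeff_eq, algebraMap_eq]
  | succ t ih =>
    obtain ⟨R, hRdeg, hR⟩ := ih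
    set Cs : Fin (k + 1) → MvPolynomial (Fin N) F := fun i => P.coeff (i : ℕ) with hCs
    set g : MvPolynomial (Fin N) F := aeval Cs R with hg
    have hfg : lvlt (t + 1) (f - g) := homLE_eq_iff.mp hR
    have hcc : constantCoeff g = constantCoeff f := by
      have := hfg 0 (by simp)
      rw [coeff_sub, sub_eq_zero] at this
      rw [constantCoeff_eq]
      exact this.symm
    have hc : constantCoeff (P.derivative.eval g) ≠ 0 := hderiv' g hcc
    have hnewt := newton P f g t hroot hfg hc
    set c : F := constantCoeff (P.derivative.eval g) with hcdef
    set R' : MvPolynomial (Fin (k + 1)) F :=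
      R - C c⁻¹ * ∑ i : Fin (k + 1), X i * R ^ (i : ℕ) with hR'
    have hev : aeval Cs R' = g - C c⁻¹ * P.eval g := by
      have hPg : P.eval g = ∑ i : Fin (k + 1), Cs i * g ^ (i : ℕ) := by
        rw [Polynomial.eval_eq_sum_range' (Nat.lt_succ_of_le hdeg)]
        rw [Fin.sum_univ_eq_sum_range (fun i => P.coeff i * g ^ i)]
      rw [hR']
      rw [map_sub, map_mul, map_sum]
      simp only [map_mul, map_pow, aeval_X, algebraMap_eq, aeval_C]
      rw [hPg, ← hg]
    obtain ⟨R'', hdeg'', hlv''⟩ := truncation Cs (t + 1) R'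
    refine ⟨R'', hdeg'', ?_⟩
    rw [homLE_eq_iff]
    have hsplit : f - aeval Cs R'' = (f - aeval Cs R') + (aeval Cs R' - aeval Cs R'') := by
      ring
    rw [hsplit]
    exact lvlt_add (by rw [hev]; exact hnewt) hlv''
end

section
/- There is an absolute constant C such that for every pair of natural numbers a, b with 2 ≤ b < 2^a, there exist an integer l ≤ C·a²/log₂ b and sets S_1, S_2, …, S_b ⊆ {1, 2, …, l} such that |S_i| = a for every i, and |S_i ∩ S_j| ≤ log₂ b for all i ≠ j. -/
open Finset

/-- `k^k ≤ 3^k · k!` over the reals. -/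
lemma pow_self_le_three_pow_mul_factorial (k : ℕ) :
    (k : ℝ) ^ k ≤ 3 ^ k * (Nat.factorial k : ℝ) := by
  induction k with
  | zero => simp
  | succ n ih =>
    rcases Nat.eq_zero_or_pos n with h | h
    · subst h; norm_num [Nat.factorial]
    · have hn0 : (0:ℝ) < n := by exact_mod_cast h
      have hstep : ((n : ℝ) + 1) ^ n ≤ 3 * (n : ℝ) ^ n := by
        have h1 : (n:ℝ) + 1 = n * (1 + 1/n) := by field_simp
        have h2 : (1 + 1/(n:ℝ)) ^ n ≤ Real.exp 1 := by
          have hle : (1 : ℝ) + 1/n ≤ Real.exp (1/n) := by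
            have := Real.add_one_le_exp (1/(n:ℝ)); linarith
          calc (1 + 1/(n:ℝ)) ^ n ≤ (Real.exp (1/n)) ^ n := by
                apply pow_le_pow_left₀ (by positivity) hle
            _ = Real.exp 1 := by
                rw [← Real.exp_nat_mul]; congr 1; field_simp
        have h3 : Real.exp 1 ≤ 3 := by
          have := Real.exp_one_lt_d9; linarith
        calc ((n:ℝ)+1)^n = (n:ℝ)^n * (1+1/n)^n := by rw [h1, mul_pow]
          _ ≤ (n:ℝ)^n * 3 := by
              apply mul_le_mul_of_nonneg_left (h2.trans h3) (by positivity)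
          _ = 3 * (n:ℝ)^n := by ring
      have hfs : (Nat.factorial (n+1) : ℝ) = ((n:ℝ)+1) * (Nat.factorial n : ℝ) := by
        push_cast [Nat.factorial_succ]; ring
      have hnn : (0:ℝ) ≤ ((n:ℝ)+1) := by positivity
      push_cast
      calc ((n:ℝ)+1)^(n+1) = ((n:ℝ)+1) * ((n:ℝ)+1)^n := by ring
        _ ≤ ((n:ℝ)+1) * (3 * (n:ℝ)^n) := by
            exact mul_le_mul_of_nonneg_left hstep hnn
        _ ≤ ((n:ℝ)+1) * (3 * (3^n * (Nat.factorial n : ℝ))) := by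
            apply mul_le_mul_of_nonneg_left _ hnn
            apply mul_le_mul_of_nonneg_left ih (by norm_num)
        _ = 3^(n+1) * (((n:ℝ)+1) * (Nat.factorial n : ℝ)) := by ring
        _ = 3^(n+1) * (Nat.factorial (n+1) : ℝ) := by rw [hfs]

/-- The number of functions agreeing with `w` on at least `m+1` coordinates is at most
`C(a, m+1) · q^(a-(m+1))`. -/
lemma badcard (a q m : ℕ) (w : Fin a → Fin q) :
    (Finset.univ.filter fun w' : Fin a → Fin q =>
        m + 1 ≤ (Finset.univ.filter fun i => w i = w' i).card).card
      ≤ a.choose (m+1) * q ^ (a - (m+1)) := by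
  classical
  set T0 := Finset.powersetCard (m+1) (Finset.univ : Finset (Fin a)) with hT0
  have hsub : (Finset.univ.filter fun w' : Fin a → Fin q =>
        m + 1 ≤ (Finset.univ.filter fun i => w i = w' i).card)
      ⊆ T0.biUnion (fun T => Finset.univ.filter fun w' : Fin a → Fin q => ∀ i ∈ T, w' i = w i) := by
    intro w' hw'
    simp only [Finset.mem_filter, Finset.mem_univ, true_and] at hw'
    obtain ⟨T, hT, hTcard⟩ := Finset.exists_subset_card_eq hw'
    refine Finset.mem_biUnion.2 ⟨T, Finset.mem_powersetCard.2 ⟨Finset.subset_univ T, hTcard⟩, ?_⟩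
    simp only [Finset.mem_filter, Finset.mem_univ, true_and]
    intro i hi
    exact ((Finset.mem_filter.1 (hT hi)).2).symm
  have hone : ∀ T ∈ T0,
      (Finset.univ.filter fun w' : Fin a → Fin q => ∀ i ∈ T, w' i = w i).card
        ≤ q ^ (a - (m+1)) := by
    intro T hT
    have hTcard : T.card = m + 1 := (Finset.mem_powersetCard.1 hT).2
    have := Finset.card_le_card_of_injOn
      (f := fun (w' : Fin a → Fin q) (j : {i // i ∈ Finset.univ \ T}) => w' j.1)
      (s := Finset.univ.filter fun w' : Fin a → Fin q => ∀ i ∈ T, w' i = w i)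
      (t := Finset.univ)
      (fun _ _ => Finset.mem_univ _) ?_
    · refine this.trans_eq ?_
      rw [Finset.card_univ, Fintype.card_fun, Fintype.card_fin, Fintype.card_coe,
        Finset.card_sdiff_of_subset (Finset.subset_univ T), Finset.card_univ, Fintype.card_fin, hTcard]
    · intro u hu v hv huv
      simp only [Finset.coe_filter, Set.mem_setOf_eq, Finset.mem_univ, true_and] at hu hv
      funext i
      by_cases hi : i ∈ T
      · rw [hu i hi, hv i hi]
      · have hmem : i ∈ Finset.univ \ T := Finset.mem_sdiff.2 ⟨Finset.mem_univ i, hi⟩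
        exact congrFun huv ⟨i, hmem⟩
  calc (Finset.univ.filter fun w' : Fin a → Fin q =>
        m + 1 ≤ (Finset.univ.filter fun i => w i = w' i).card).card
      ≤ (T0.biUnion (fun T => Finset.univ.filter fun w' : Fin a → Fin q => ∀ i ∈ T, w' i = w i)).card :=
        Finset.card_le_card hsub
    _ ≤ ∑ T ∈ T0, (Finset.univ.filter fun w' : Fin a → Fin q => ∀ i ∈ T, w' i = w i).card :=
        Finset.card_biUnion_le
    _ ≤ ∑ _T ∈ T0, q ^ (a - (m+1)) := Finset.sum_le_sum hone
    _ = T0.card * q ^ (a - (m+1)) := by rw [Finset.sum_const, smul_eq_mul]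
    _ = a.choose (m+1) * q ^ (a - (m+1)) := by
        rw [hT0, Finset.card_powersetCard, Finset.card_univ, Fintype.card_fin]

lemma exists_family (a q m b : ℕ) (hma : m + 1 ≤ a)
    (hcount : b * (a.choose (m+1) * q ^ (a - (m+1))) < q ^ a) :
    ∃ F : Finset (Fin a → Fin q), F.card = b ∧
      ∀ w ∈ F, ∀ w' ∈ F, w ≠ w' →
        (Finset.univ.filter fun i => w i = w' i).card ≤ m := by
  classical
  suffices H : ∀ t, t ≤ b → ∃ F : Finset (Fin a → Fin q), F.card = t ∧
      ∀ w ∈ F, ∀ w' ∈ F, w ≠ w' →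
        (Finset.univ.filter fun i => w i = w' i).card ≤ m from H b le_rfl
  intro t ht
  induction t with
  | zero => exact ⟨∅, by simp, by simp⟩
  | succ n ih =>
    obtain ⟨F, hcardF, hF⟩ := ih (Nat.le_of_succ_le ht)
    set Bad := F.biUnion (fun w => Finset.univ.filter fun w' : Fin a → Fin q =>
      m + 1 ≤ (Finset.univ.filter fun i => w i = w' i).card) with hBadDef
    have hBadcard : Bad.card < q ^ a := by
      have h1 : Bad.card ≤ F.card * (a.choose (m+1) * q ^ (a - (m+1))) := by
        calc Bad.card ≤ ∑ w ∈ F, (Finset.univ.filter fun w' : Fin a → Fin q =>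
              m + 1 ≤ (Finset.univ.filter fun i => w i = w' i).card).card :=
            Finset.card_biUnion_le
          _ ≤ ∑ _w ∈ F, (a.choose (m+1) * q ^ (a - (m+1))) :=
            Finset.sum_le_sum (fun w _ => badcard a q m w)
          _ = F.card * (a.choose (m+1) * q ^ (a - (m+1))) := by
            rw [Finset.sum_const, smul_eq_mul]
      have h2 : F.card * (a.choose (m+1) * q ^ (a - (m+1)))
          ≤ b * (a.choose (m+1) * q ^ (a - (m+1))) :=
        Nat.mul_le_mul_right _ (by omega)
      omega
    have hex : ∃ w₀ : Fin a → Fin q, w₀ ∉ Bad := by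
      by_contra hco
      push_neg at hco
      have hsub : (Finset.univ : Finset (Fin a → Fin q)) ⊆ Bad := fun x _ => hco x
      have := Finset.card_le_card hsub
      rw [Finset.card_univ, Fintype.card_fun, Fintype.card_fin, Fintype.card_fin] at this
      omega
    obtain ⟨w₀, hw₀⟩ := hex
    have hself : (Finset.univ.filter fun i : Fin a => w₀ i = w₀ i).card = a := by
      rw [Finset.filter_true_of_mem (fun i _ => rfl), Finset.card_univ, Fintype.card_fin]
    have hw₀F : w₀ ∉ F := by
      intro hmem
      exact hw₀ (Finset.mem_biUnion.2 ⟨w₀, hmem,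
        Finset.mem_filter.2 ⟨Finset.mem_univ _, by rw [hself]; omega⟩⟩)
    have hgood : ∀ w ∈ F, (Finset.univ.filter fun i => w i = w₀ i).card ≤ m := by
      intro w hw
      by_contra hcon
      exact hw₀ (Finset.mem_biUnion.2 ⟨w, hw, by
        simp only [Finset.mem_filter, Finset.mem_univ, true_and]; omega⟩)
    have hsymm : ∀ u v : Fin a → Fin q,
        (Finset.univ.filter fun i => u i = v i) = (Finset.univ.filter fun i => v i = u i) := by
      intro u v
      apply Finset.filter_congr
      intro i _
      simp [eq_comm]
    refine ⟨insert w₀ F, by rw [Finset.card_insert_of_notMem hw₀F, hcardF], ?_⟩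
    intro w hw w' hw' hne
    rcases Finset.mem_insert.1 hw with h1 | h1
    · rcases Finset.mem_insert.1 hw' with h2 | h2
      · exact absurd (h1.trans h2.symm) hne
      · subst h1; rw [hsymm]; exact hgood w' h2
    · rcases Finset.mem_insert.1 hw' with h2 | h2
      · subst h2; exact hgood w h1
      · exact hF w h1 w' h2 hne

/-- Nisan–Wigderson designs. There is an absolute constant `C` such
that for all naturals `a, b` with `2 ≤ b < 2^a` there exist `l ≤ C·a²/log₂ b` and sets
`S_1, …, S_b ⊆ {1,…,l}` with `|S_i| = a` for every `i` and `|S_i ∩ S_j| ≤ log₂ b` for all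
`i ≠ j`. -/
theorem stmt16 :
    ∃ C : ℝ, ∀ a b : ℕ, 2 ≤ b → b < 2 ^ a →
      ∃ l : ℕ, (l : ℝ) ≤ C * (a : ℝ) ^ 2 / Real.logb 2 b ∧
      ∃ S : Fin b → Finset (Fin l),
        (∀ i, (S i).card = a) ∧
        ∀ i j, i ≠ j → (((S i ∩ S j).card : ℝ)) ≤ Real.logb 2 b := by
  classical
  refine ⟨7, fun a b hb hba => ?_⟩
  set m := Nat.log 2 b with hm
  have h2m : 2 ^ m ≤ b := Nat.pow_log_le_self 2 (by omega)
  have hmb : b < 2 ^ (m + 1) := Nat.lt_pow_succ_log_self (by norm_num) b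
  have hm1 : 1 ≤ m := by
    by_contra h
    interval_cases m <;> omega
  have hma : m + 1 ≤ a := by
    have : 2 ^ m < 2 ^ a := lt_of_le_of_lt h2m hba
    exact Nat.pow_lt_pow_iff_right (by norm_num) |>.mp this
  set k := m + 1 with hk
  set q := 6 * a / k + 1 with hq
  have hk2 : 2 ≤ k := by omega
  have hka : k ≤ a := hma
  have ha2 : 2 ≤ a := le_trans hk2 hka
  have hkpos : (0:ℝ) < k := by positivity
  have hapos : (0:ℝ) < a := by
    have : 0 < a := by omega
    exact_mod_cast this
  -- q > 6a/k over ℝ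
  have hq_gt : 6 * (a:ℝ) / k < q := by
    have hdm := Nat.div_add_mod (6 * a) k
    have hmod : 6 * a % k < k := Nat.mod_lt _ (by omega)
    have hN : 6 * a < q * k := by
      calc 6 * a = k * (6 * a / k) + 6 * a % k := (Nat.div_add_mod _ _).symm
        _ < k * (6 * a / k) + k := by omega
        _ = q * k := by rw [hq]; ring
    rw [div_lt_iff₀ hkpos]
    calc 6 * (a:ℝ) = ((6 * a : ℕ) : ℝ) := by push_cast; ring
      _ < ((q * k : ℕ) : ℝ) := by exact_mod_cast hN
      _ = (q:ℝ) * k := by push_cast; ring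
  have hq_le : (q:ℝ) ≤ 6 * a / k + 1 := by
    rw [hq]
    push_cast
    have := Nat.cast_div_le (α := ℝ) (m := 6 * a) (n := k)
    push_cast at this
    linarith
  -- the key counting inequality
  have key : (b:ℝ) * (a.choose k) < (q:ℝ) ^ k := by
    have h1 : (b:ℝ) ≤ 2 ^ k := by
      have : b ≤ 2 ^ k := le_of_lt hmb
      exact_mod_cast this
    have h2 : ((a.choose k : ℕ):ℝ) ≤ (a:ℝ) ^ k / (Nat.factorial k) := by
      exact_mod_cast Nat.choose_le_pow_div k a
    have h3 : (k:ℝ) ^ k ≤ 3 ^ k * (Nat.factorial k) := pow_self_le_three_pow_mul_factorial k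
    have hfpos : (0:ℝ) < (Nat.factorial k : ℝ) := by
      exact_mod_cast Nat.factorial_pos k
    have h4 : (a:ℝ) ^ k / (Nat.factorial k) ≤ 3 ^ k * (a:ℝ) ^ k / (k:ℝ) ^ k := by
      rw [div_le_div_iff₀ hfpos (by positivity)]
      calc (a:ℝ) ^ k * (k:ℝ) ^ k ≤ (a:ℝ) ^ k * (3 ^ k * (Nat.factorial k)) := by
            apply mul_le_mul_of_nonneg_left h3 (by positivity)
        _ = 3 ^ k * (a:ℝ) ^ k * (Nat.factorial k) := by ring
    have h5 : (2:ℝ) ^ k * (3 ^ k * (a:ℝ) ^ k / (k:ℝ) ^ k) = (6 * (a:ℝ) / k) ^ k := by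
      have h66 : (6:ℝ) ^ k = 2 ^ k * 3 ^ k := by
        rw [show (6:ℝ) = 2 * 3 by norm_num, mul_pow]
      rw [div_pow, mul_pow, h66]
      ring
    have h6 : (6 * (a:ℝ) / k) ^ k < (q:ℝ) ^ k := by
      apply pow_lt_pow_left₀ hq_gt (by positivity) (by omega)
    calc (b:ℝ) * (a.choose k) ≤ 2 ^ k * ((a:ℝ) ^ k / (Nat.factorial k)) := by
          apply mul_le_mul h1 h2 (by positivity) (by positivity)
      _ ≤ 2 ^ k * (3 ^ k * (a:ℝ) ^ k / (k:ℝ) ^ k) := by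
          apply mul_le_mul_of_nonneg_left h4 (by positivity)
      _ = (6 * (a:ℝ) / k) ^ k := h5
      _ < (q:ℝ) ^ k := h6
  have keyN : b * a.choose k < q ^ k := by
    have := key
    push_cast at this
    exact_mod_cast this
  have hqpos : 0 < q := Nat.succ_pos _
  have hcount : b * (a.choose k * q ^ (a - k)) < q ^ a := by
    have hkak : k + (a - k) = a := by omega
    have hqk : 0 < q ^ (a - k) := Nat.pow_pos hqpos
    calc b * (a.choose k * q ^ (a - k)) = (b * a.choose k) * q ^ (a - k) := by ring
      _ < q ^ k * q ^ (a - k) := by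
          exact Nat.mul_lt_mul_of_lt_of_le keyN le_rfl hqk
      _ = q ^ a := by rw [← pow_add, hkak]
  obtain ⟨F, hFcard, hFgood⟩ := exists_family a q m b hma hcount
  -- enumerate the family
  set w : Fin b → (Fin a → Fin q) :=
    fun i => (F.equivFin.symm (Fin.cast hFcard.symm i)).1 with hwdef
  have hwmem : ∀ i, w i ∈ F := fun i => (F.equivFin.symm (Fin.cast hFcard.symm i)).2
  have hwinj : Function.Injective w := by
    intro i j hij
    have h1 : F.equivFin.symm (Fin.cast hFcard.symm i)
        = F.equivFin.symm (Fin.cast hFcard.symm j) := Subtype.ext hij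
    have h2 := F.equivFin.symm.injective h1
    have h3 : (Fin.cast hFcard.symm i : Fin F.card).val = (Fin.cast hFcard.symm j).val :=
      congrArg Fin.val h2
    exact Fin.ext h3
  refine ⟨a * q, ?_, ?_⟩
  -- the size bound
  · have hlogpos : (0:ℝ) < Real.logb 2 b := by
      have : (1:ℝ) ≤ Real.logb 2 b := by
        calc (1:ℝ) = Real.logb 2 2 := (Real.logb_self_eq_one (by norm_num)).symm
          _ ≤ Real.logb 2 b := Real.logb_le_logb_of_le (by norm_num) (by norm_num)
            (by exact_mod_cast hb)
      linarith
    have hlogk : Real.logb 2 b ≤ k := by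
      have h1 : Real.logb 2 b < Real.logb 2 ((2:ℝ) ^ k) := by
        apply Real.logb_lt_logb (by norm_num) (by positivity)
        exact_mod_cast hmb
      have h2 : Real.logb 2 ((2:ℝ) ^ k) = k := by
        rw [Real.logb_pow, Real.logb_self_eq_one (by norm_num), mul_one]
      linarith
    have hl1 : ((a * q : ℕ):ℝ) ≤ 7 * (a:ℝ)^2 / k := by
      have h0 : ((a * q : ℕ):ℝ) = (a:ℝ) * (q:ℝ) := by push_cast; ring
      rw [h0]
      calc (a:ℝ) * q ≤ (a:ℝ) * (6 * a / k + 1) := by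
            apply mul_le_mul_of_nonneg_left hq_le (by positivity)
        _ = 6 * (a:ℝ)^2 / k + a := by field_simp
        _ ≤ 6 * (a:ℝ)^2 / k + (a:ℝ)^2 / k := by
            have : (a:ℝ) ≤ (a:ℝ)^2 / k := by
              rw [le_div_iff₀ hkpos]
              have : (k:ℝ) ≤ a := by exact_mod_cast hka
              nlinarith
            linarith
        _ = 7 * (a:ℝ)^2 / k := by ring
    calc ((a * q : ℕ):ℝ) ≤ 7 * (a:ℝ)^2 / k := hl1
      _ ≤ 7 * (a:ℝ)^2 / Real.logb 2 b := by
          apply div_le_div_of_nonneg_left (by positivity) hlogpos hlogk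
  -- the sets
  · have hgraphinj : ∀ u : Fin a → Fin q, Function.Injective (fun x : Fin a => (x, u x)) := by
      intro u x y hxy
      exact congrArg Prod.fst hxy
    refine ⟨fun i => (Finset.univ.image fun x : Fin a => (x, w i x)).map
      finProdFinEquiv.toEmbedding, ?_, ?_⟩
    · intro i
      rw [Finset.card_map, Finset.card_image_of_injective _ (hgraphinj (w i)),
        Finset.card_univ, Fintype.card_fin]
    · intro i j hij
      have hmlog : (m:ℝ) ≤ Real.logb 2 b := by
        have h1 : Real.logb 2 ((2:ℝ) ^ m) ≤ Real.logb 2 b := by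
          apply Real.logb_le_logb_of_le (by norm_num) (by positivity)
          exact_mod_cast h2m
        have h2 : Real.logb 2 ((2:ℝ) ^ m) = m := by
          rw [Real.logb_pow, Real.logb_self_eq_one (by norm_num), mul_one]
        linarith
      have hne : w i ≠ w j := fun h => hij (hwinj h)
      have hAgr : (Finset.univ.filter fun x : Fin a => w i x = w j x).card ≤ m :=
        hFgood (w i) (hwmem i) (w j) (hwmem j) hne
      have hsub : (Finset.univ.image fun x : Fin a => (x, w i x)) ∩
          (Finset.univ.image fun x : Fin a => (x, w j x)) ⊆
          (Finset.univ.filter fun x : Fin a => w i x = w j x).image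
            (fun x : Fin a => (x, w i x)) := by
        intro p hp
        rw [Finset.mem_inter] at hp
        obtain ⟨hp1, hp2⟩ := hp
        obtain ⟨x, _, hx⟩ := Finset.mem_image.1 hp1
        obtain ⟨y, _, hy⟩ := Finset.mem_image.1 hp2
        have hxy : x = y := by
          have := hx.trans hy.symm
          exact congrArg Prod.fst this
        subst hxy
        have heq : w i x = w j x := by
          have := hx.trans hy.symm
          exact congrArg Prod.snd this
        exact Finset.mem_image.2 ⟨x, Finset.mem_filter.2 ⟨Finset.mem_univ x, heq⟩, hx⟩
      have hcard : ((Finset.univ.image fun x : Fin a => (x, w i x)) ∩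
          (Finset.univ.image fun x : Fin a => (x, w j x))).card ≤ m := by
        calc _ ≤ ((Finset.univ.filter fun x : Fin a => w i x = w j x).image
              (fun x : Fin a => (x, w i x))).card := Finset.card_le_card hsub
          _ ≤ (Finset.univ.filter fun x : Fin a => w i x = w j x).card :=
              Finset.card_image_le
          _ ≤ m := hAgr
      rw [← Finset.map_inter, Finset.card_map]
      calc ((((Finset.univ.image fun x : Fin a => (x, w i x)) ∩
            (Finset.univ.image fun x : Fin a => (x, w j x))).card : ℕ) : ℝ)
          ≤ (m:ℝ) := by exact_mod_cast hcard
        _ ≤ Real.logb 2 b := hmlog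
end
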